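/- arXiv:2102.05495 — 3 statements merged into one kernel-verified Lean document; each statement's English description precedes it below -/
import Mathlib

section
/- Let Ω, Σ : ℝ → ℝ be differentiable functions satisfying the γ = 1 averaged Bianchi I system dΩ/dτ = (3/2)Σ(τ)²Ω(τ) and dΣ/dτ = −(3/2)Σ(τ)(1 − Σ(τ)²), with Ω(τ) > 0 for all τ. Then: (i) the quantity (1 − Σ(τ)²)/Ω(τ)² is constant in τ, so the orbits satisfy Σ(τ)² = 1 − (1 − Σ₀²)Ω(τ)²/Ω₀², where Ω₀ = Ω(0), Σ₀ = Σ(0); and (ii) Σ(τ)²/Ω(τ)² = (Σ₀²/Ω₀²) e^{−3τ} for all τ. -/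
/-- For the `γ = 1` averaged Bianchi I system
`Ω' = (3/2)Σ²Ω`, `Σ' = −(3/2)Σ(1 − Σ²)` with `Ω > 0`:
(i) `(1 − Σ²)/Ω²` is a conserved quantity, so the orbits satisfy
`Σ(τ)² = 1 − (1 − Σ₀²)Ω(τ)²/Ω₀²`; and (ii) `Σ²/Ω² = (Σ₀²/Ω₀²) e^{−3τ}`. -/
theorem bianchiI_dust_orbits
    (Ω S : ℝ → ℝ)
    (hΩpos : ∀ τ : ℝ, Ω τ > 0)
    (hΩ : ∀ τ : ℝ, HasDerivAt Ω ((3/2) * S τ ^ 2 * Ω τ) τ)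
    (hS : ∀ τ : ℝ, HasDerivAt S (-(3/2) * S τ * (1 - S τ ^ 2)) τ) :
    (∀ τ : ℝ, (1 - S τ ^ 2) / Ω τ ^ 2 = (1 - S 0 ^ 2) / Ω 0 ^ 2) ∧
    (∀ τ : ℝ, S τ ^ 2 = 1 - (1 - S 0 ^ 2) * Ω τ ^ 2 / Ω 0 ^ 2) ∧
    (∀ τ : ℝ, S τ ^ 2 / Ω τ ^ 2 = (S 0 ^ 2 / Ω 0 ^ 2) * Real.exp (-3 * τ)) := by
  have hΩne : ∀ τ : ℝ, Ω τ ^ 2 ≠ 0 := fun τ => pow_ne_zero _ (hΩpos τ).ne'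
  -- first conserved quantity
  have hf : ∀ τ : ℝ, HasDerivAt (fun τ => (1 - S τ ^ 2) / Ω τ ^ 2) 0 τ := by
    intro τ
    have h1 : HasDerivAt (fun τ => 1 - S τ ^ 2)
        (0 - 2 * S τ ^ 1 * (-(3/2) * S τ * (1 - S τ ^ 2))) τ :=
      (hasDerivAt_const τ (1:ℝ)).sub (((hS τ).pow 2))
    have h2 : HasDerivAt (fun τ => Ω τ ^ 2)
        (2 * Ω τ ^ 1 * ((3/2) * S τ ^ 2 * Ω τ)) τ := (hΩ τ).pow 2
    have := h1.div h2 (hΩne τ)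
    refine this.congr_deriv ?_
    field_simp
    ring
  have hconst1 : ∀ τ : ℝ, (1 - S τ ^ 2) / Ω τ ^ 2 = (1 - S 0 ^ 2) / Ω 0 ^ 2 := by
    intro τ
    have : ∀ a b : ℝ, (1 - S a ^ 2) / Ω a ^ 2 = (1 - S b ^ 2) / Ω b ^ 2 := by
      intro a b
      exact is_const_of_deriv_eq_zero (fun x => (hf x).differentiableAt)
        (fun x => (hf x).deriv) a b
    exact this τ 0
  refine ⟨hconst1, ?_, ?_⟩
  · intro τ
    have h := hconst1 τ
    have h0 := hΩne 0
    have hτ := hΩne τ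
    field_simp at h ⊢
    have key : Ω τ ^ 2 * (1 - S 0 ^ 2) / Ω 0 ^ 2 = 1 - S τ ^ 2 := by
      rw [div_eq_iff h0]; rw [div_eq_div_iff hτ h0] at h; linear_combination -h
    linarith [key]
  · -- second conserved quantity
    have hg : ∀ τ : ℝ, HasDerivAt
        (fun τ => S τ ^ 2 / Ω τ ^ 2 * Real.exp (3 * τ)) 0 τ := by
      intro τ
      have h1 : HasDerivAt (fun τ => S τ ^ 2)
          (2 * S τ ^ 1 * (-(3/2) * S τ * (1 - S τ ^ 2))) τ := (hS τ).pow 2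
      have h2 : HasDerivAt (fun τ => Ω τ ^ 2)
          (2 * Ω τ ^ 1 * ((3/2) * S τ ^ 2 * Ω τ)) τ := (hΩ τ).pow 2
      have h3 : HasDerivAt (fun τ : ℝ => Real.exp (3 * τ))
          (Real.exp (3 * τ) * 3) τ := by
        simpa [Function.comp_def] using (Real.hasDerivAt_exp (3 * τ)).comp τ
          ((hasDerivAt_id τ).const_mul 3)
      have h0 : Ω τ ≠ 0 := (hΩpos τ).ne'
      have := (h1.div h2 (hΩne τ)).mul h3
      refine this.congr_deriv ?_
      simp only [Pi.div_apply]
      field_simp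
      ring
    have hconst2 : ∀ τ : ℝ, S τ ^ 2 / Ω τ ^ 2 * Real.exp (3 * τ)
        = S 0 ^ 2 / Ω 0 ^ 2 * Real.exp (3 * 0) :=
      fun τ => is_const_of_deriv_eq_zero (fun x => (hg x).differentiableAt)
        (fun x => (hg x).deriv) τ 0
    intro τ
    have h := hconst2 τ
    have hexp : Real.exp (-3 * τ) * Real.exp (3 * τ) = 1 := by
      rw [← Real.exp_add]; ring_nf; exact Real.exp_zero
    have : S τ ^ 2 / Ω τ ^ 2 * Real.exp (3 * τ) * Real.exp (-3 * τ)
        = S 0 ^ 2 / Ω 0 ^ 2 * Real.exp (3 * 0) * Real.exp (-3 * τ) := by rw [h]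
    calc S τ ^ 2 / Ω τ ^ 2
        = S τ ^ 2 / Ω τ ^ 2 * (Real.exp (3 * τ) * Real.exp (-3 * τ)) := by
          rw [mul_comm (Real.exp (3*τ)), hexp, mul_one]
      _ = S 0 ^ 2 / Ω 0 ^ 2 * Real.exp (3 * 0) * Real.exp (-3 * τ) := by
          rw [← mul_assoc]; exact this
      _ = S 0 ^ 2 / Ω 0 ^ 2 * Real.exp (-3 * τ) := by norm_num
end

section
/- Let γ be a real number and Ω₀ ∈ (0, 1). Define Ω̄(τ) = Ω₀ e^{3γτ/2} / √( Ω₀² e^{3γτ} + e^{3τ}(1 − Ω₀²) ) for τ ∈ ℝ. Then the expression under the square root is positive for all τ, Ω̄(0) = Ω₀, and Ω̄ is differentiable with dΩ̄/dτ = −(3/2)(γ − 1) Ω̄(τ) ( Ω̄(τ)² − 1 ) for all τ ∈ ℝ. -/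
/-- The explicit function
`Ω̄(τ) = Ω₀ e^{3γτ/2} / √(Ω₀² e^{3γτ} + e^{3τ}(1 − Ω₀²))` is well defined (the radicand
is positive), satisfies `Ω̄(0) = Ω₀`, and solves `dΩ̄/dτ = −(3/2)(γ−1)Ω̄(Ω̄² − 1)`. -/
theorem flatFLRW_averaged_solution
    (γ Ω₀ : ℝ) (hΩ₀ : Ω₀ ∈ Set.Ioo (0 : ℝ) 1)
    (Ω : ℝ → ℝ)
    (hΩ : ∀ τ : ℝ, Ω τ = Ω₀ * Real.exp (3 * γ * τ / 2) /
      Real.sqrt (Ω₀ ^ 2 * Real.exp (3 * γ * τ) + Real.exp (3 * τ) * (1 - Ω₀ ^ 2))) :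
    (∀ τ : ℝ, 0 < Ω₀ ^ 2 * Real.exp (3 * γ * τ) + Real.exp (3 * τ) * (1 - Ω₀ ^ 2)) ∧
    Ω 0 = Ω₀ ∧
    (∀ τ : ℝ, HasDerivAt Ω (-(3/2) * (γ - 1) * Ω τ * (Ω τ ^ 2 - 1)) τ) := by
  obtain ⟨h0, h1⟩ := hΩ₀
  have hsq : 0 < 1 - Ω₀ ^ 2 := by nlinarith
  have hpos : ∀ τ : ℝ, 0 < Ω₀ ^ 2 * Real.exp (3 * γ * τ) + Real.exp (3 * τ) * (1 - Ω₀ ^ 2) := by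
    intro τ
    positivity
  obtain rfl : Ω = fun τ => Ω₀ * Real.exp (3 * γ * τ / 2) /
      Real.sqrt (Ω₀ ^ 2 * Real.exp (3 * γ * τ) + Real.exp (3 * τ) * (1 - Ω₀ ^ 2)) :=
    funext hΩ
  refine ⟨hpos, ?_, ?_⟩
  · simp only []
    rw [mul_zero, mul_zero, zero_div, Real.exp_zero, mul_one,
      show Ω₀ ^ 2 * 1 + 1 * (1 - Ω₀ ^ 2) = 1 by ring, Real.sqrt_one, div_one]
  · intro τ
    have hupos := hpos τ
    set u : ℝ := Ω₀ ^ 2 * Real.exp (3 * γ * τ) + Real.exp (3 * τ) * (1 - Ω₀ ^ 2) with hu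
    have hA : HasDerivAt (fun t : ℝ => Ω₀ ^ 2 * Real.exp (3 * γ * t) + Real.exp (3 * t) * (1 - Ω₀ ^ 2))
        (Ω₀ ^ 2 * (Real.exp (3 * γ * τ) * (3 * γ)) + (Real.exp (3 * τ) * 3) * (1 - Ω₀ ^ 2)) τ := by
      have h1 : HasDerivAt (fun t : ℝ => 3 * γ * t) (3 * γ) τ := by
        simpa using (hasDerivAt_id τ).const_mul (3 * γ)
      have h2 : HasDerivAt (fun t : ℝ => 3 * t) (3 : ℝ) τ := by
        simpa using (hasDerivAt_id τ).const_mul (3 : ℝ)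
      exact ((h1.exp).const_mul (Ω₀ ^ 2)).add ((h2.exp).mul_const (1 - Ω₀ ^ 2))
    have hS : HasDerivAt (fun t : ℝ => Real.sqrt (Ω₀ ^ 2 * Real.exp (3 * γ * t) + Real.exp (3 * t) * (1 - Ω₀ ^ 2)))
        ((Ω₀ ^ 2 * (Real.exp (3 * γ * τ) * (3 * γ)) + (Real.exp (3 * τ) * 3) * (1 - Ω₀ ^ 2)) / (2 * Real.sqrt u)) τ :=
      hA.sqrt (by rw [← hu]; exact hupos.ne')
    have hN : HasDerivAt (fun t : ℝ => Ω₀ * Real.exp (3 * γ * t / 2))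
        (Ω₀ * (Real.exp (3 * γ * τ / 2) * (3 * γ / 2))) τ := by
      have h1 : HasDerivAt (fun t : ℝ => 3 * γ * t / 2) (3 * γ / 2) τ := by
        simpa using ((hasDerivAt_id τ).const_mul (3 * γ)).div_const 2
      exact (h1.exp).const_mul Ω₀
    have hs : 0 < Real.sqrt u := Real.sqrt_pos.2 hupos
    have hs2 : Real.sqrt u ^ 2 = u := Real.sq_sqrt hupos.le
    have he : Real.exp (3 * γ * τ / 2) ^ 2 = Real.exp (3 * γ * τ) := by
      rw [sq, ← Real.exp_add]
      ring_nf
    have hD := hN.div hS hs.ne'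
    convert hD using 1
    · rfl
    · rfl
    · rfl
    rw [← hu]
    field_simp
    rw [← hu]
    linear_combination (-(γ - 1) * Ω₀ ^ 2 * Real.sqrt u ^ 3) * he
      + (-Real.sqrt u ^ 3) * hs2 + (-Real.sqrt u ^ 3) * hu
end

section
/- Let H₀ > 0 and ω > 0, and define H(t) = 4H₀ω / (6H₀tω + 3H₀ sin(2tω) + 4ω) for t ≥ 0. Then the denominator is positive for all t ≥ 0, H(0) = H₀, H is differentiable with H'(t) = −3 H(t)² cos²(ωt) for all t ≥ 0, and t·H(t) → 2/3 as t → +∞ (i.e. H(t) ∼ 2/(3t) for large t). -/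
open Filter

theorem neg_le_sin_of_nonneg {x : ℝ} (hx : 0 ≤ x) : -x ≤ Real.sin x := by
  rcases le_or_gt x 1 with h | h
  · have hs : 0 ≤ Real.sin x :=
      Real.sin_nonneg_of_nonneg_of_le_pi hx (by nlinarith [Real.pi_gt_three])
    linarith
  · have := Real.neg_one_le_sin x
    linarith

/-- The explicit function
`H(t) = 4H₀ω/(6H₀tω + 3H₀ sin(2tω) + 4ω)` has positive denominator for `t ≥ 0`,
satisfies `H(0) = H₀` and `H' = −3H² cos²(ωt)` on `[0, ∞)`, and `t·H(t) → 2/3` as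
`t → +∞`. -/
theorem scalar_field_dominated_H_asymptotics
    (H₀ ω : ℝ) (hH₀ : 0 < H₀) (hω : 0 < ω)
    (H : ℝ → ℝ)
    (hHdef : ∀ t : ℝ, H t = 4 * H₀ * ω / (6 * H₀ * t * ω + 3 * H₀ * Real.sin (2 * t * ω) + 4 * ω)) :
    (∀ t : ℝ, 0 ≤ t → 0 < 6 * H₀ * t * ω + 3 * H₀ * Real.sin (2 * t * ω) + 4 * ω) ∧
    H 0 = H₀ ∧
    (∀ t : ℝ, 0 ≤ t → HasDerivAt H (-3 * H t ^ 2 * Real.cos (ω * t) ^ 2) t) ∧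
    Tendsto (fun t : ℝ => t * H t) atTop (nhds (2/3)) := by
  have hDpos : ∀ t : ℝ, 0 ≤ t → 0 < 6 * H₀ * t * ω + 3 * H₀ * Real.sin (2 * t * ω) + 4 * ω := by
    intro t ht
    have h1 : -(2 * t * ω) ≤ Real.sin (2 * t * ω) :=
      neg_le_sin_of_nonneg (by positivity)
    nlinarith
  refine ⟨hDpos, ?_, ?_, ?_⟩
  · rw [hHdef 0]
    simp
    field_simp
  · intro t ht
    have hD : (6 * H₀ * t * ω + 3 * H₀ * Real.sin (2 * t * ω) + 4 * ω) ≠ 0 :=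
      ne_of_gt (hDpos t ht)
    have hden : HasDerivAt (fun t : ℝ => 6 * H₀ * t * ω + 3 * H₀ * Real.sin (2 * t * ω) + 4 * ω)
        (6 * H₀ * ω + 3 * H₀ * (Real.cos (2 * t * ω) * (2 * ω))) t := by
      have hs : HasDerivAt (fun t : ℝ => Real.sin (2 * t * ω)) (Real.cos (2 * t * ω) * (2 * ω)) t := by
        have := (Real.hasDerivAt_sin (2 * t * ω)).comp t
          (((hasDerivAt_id t).const_mul 2).mul_const ω)
        simpa [Function.comp_def] using this
      have := ((((hasDerivAt_id t).const_mul (6 * H₀)).mul_const ω).add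
        (hs.const_mul (3 * H₀))).add_const (4 * ω)
      exact this.congr_deriv (by ring)
    have hH : HasDerivAt H
        (-(4 * H₀ * ω * (6 * H₀ * ω + 3 * H₀ * (Real.cos (2 * t * ω) * (2 * ω)))) /
          (6 * H₀ * t * ω + 3 * H₀ * Real.sin (2 * t * ω) + 4 * ω) ^ 2) t := by
      have := ((hasDerivAt_const t (4 * H₀ * ω)).div hden hD)
      have heq : H = fun t => 4 * H₀ * ω / (6 * H₀ * t * ω + 3 * H₀ * Real.sin (2 * t * ω) + 4 * ω) :=
        funext hHdef
      rw [heq]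
      exact this.congr_deriv (by ring)
    convert hH using 1
    rw [hHdef t]
    have hc : Real.cos (2 * t * ω) = 2 * Real.cos (ω * t) ^ 2 - 1 := by
      have := Real.cos_two_mul (ω * t)
      rw [show 2 * t * ω = 2 * (ω * t) by ring]
      linarith
    rw [div_pow, hc]
    field_simp
    ring
  · have key : Tendsto (fun t : ℝ => 4 * H₀ * ω /
        (6 * H₀ * ω + 3 * H₀ * Real.sin (2 * t * ω) / t + 4 * ω / t)) atTop
        (nhds (4 * H₀ * ω / (6 * H₀ * ω + 0 + 0))) := by
      apply Tendsto.div tendsto_const_nhds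
      · apply Tendsto.add (Tendsto.add tendsto_const_nhds ?_) ?_
        · apply squeeze_zero_norm' (a := fun t : ℝ => 3 * H₀ / t)
          · filter_upwards [eventually_gt_atTop (0 : ℝ)] with t ht
            rw [norm_div, Real.norm_eq_abs, Real.norm_eq_abs, abs_of_pos ht, abs_mul]
            apply div_le_div_of_nonneg_right ?_ ht.le |>.trans_eq rfl
            calc |3 * H₀| * |Real.sin (2 * t * ω)| ≤ |3 * H₀| * 1 :=
                  mul_le_mul_of_nonneg_left (abs_le.mpr ⟨Real.neg_one_le_sin _, Real.sin_le_one _⟩) (abs_nonneg _)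
              _ = 3 * H₀ := by rw [mul_one, abs_of_pos (by linarith)]
          · exact tendsto_const_nhds.div_atTop tendsto_id
        · exact tendsto_const_nhds.div_atTop tendsto_id
      · positivity
    have hlim : (4 * H₀ * ω / (6 * H₀ * ω + 0 + 0)) = 2/3 := by
      field_simp
      ring
    rw [hlim] at key
    apply key.congr'
    filter_upwards [eventually_gt_atTop (0 : ℝ)] with t ht
    rw [hHdef t]
    field_simp
end
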